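/- The assumption of reflexivity does not affect the logic E: a formula of the language of E is valid in the class of all preference models if and only if it is valid in the class of preference models whose betterness relation ≽ is reflexive. -/
import Mathlib


/-- Formulas of Åqvist's dyadic deontic logic **E**:
`φ ::= p | ¬φ | φ∧φ | □φ | ○(φ/φ)`.
`EForm.ob ψ φ` denotes `○(ψ/φ)` ("ψ is obligatory, given φ"). -/
inductive EForm : Type where
  | atom : ℕ → EForm
  | neg  : EForm → EForm
  | conj : EForm → EForm → EForm
  | box  : EForm → EForm
  | ob   : EForm → EForm → EForm
deriving DecidableEq

/-- Material implication, defined classically. -/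
def EForm.impl (φ ψ : EForm) : EForm := .neg (.conj φ (.neg ψ))

/-- Biconditional. -/
def EForm.iff' (φ ψ : EForm) : EForm := .conj (φ.impl ψ) (ψ.impl φ)

/-- A preference model `M = (W, ≽, V)`: a nonempty set of worlds, a betterness
relation, and a valuation. -/
structure PrefModel where
  W : Type
  ne : Nonempty W
  R : W → W → Prop
  V : ℕ → W → Prop

/-- Satisfaction `M,s ⊨ φ`. In particular
`M,s ⊨ ○(ψ/φ)` iff `opt_≽(‖φ‖) ⊆ ‖ψ‖`, where
`opt_≽(‖φ‖) = {w ∈ ‖φ‖ : ∀ y, (M,y ⊨ φ) → w ≽ y}`. -/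
def PrefModel.sat (M : PrefModel) : M.W → EForm → Prop
  | s, .atom n   => M.V n s
  | s, .neg φ    => ¬ PrefModel.sat M s φ
  | s, .conj φ ψ => PrefModel.sat M s φ ∧ PrefModel.sat M s ψ
  | _, .box φ    => ∀ t, PrefModel.sat M t φ
  | _, .ob ψ φ   => ∀ w, (PrefModel.sat M w φ ∧ ∀ y, PrefModel.sat M y φ → M.R w y) →
                     PrefModel.sat M w ψ

/-- Validity in the class of all preference models. -/
def EValid (φ : EForm) : Prop := ∀ (M : PrefModel) (s : M.W), M.sat s φ


/-- Duplicate each world and take the reflexive closure of the relation. -/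
def PrefModel.dup (M : PrefModel) : PrefModel where
  W := M.W × Bool
  ne := ⟨(M.ne.some, true)⟩
  R a b := M.R a.1 b.1 ∨ a = b
  V n a := M.V n a.1

lemma dup_sat (M : PrefModel) : ∀ (φ : EForm) (a : (M.dup).W),
    (M.dup).sat a φ ↔ M.sat a.1 φ := by
  intro φ
  induction φ with
  | atom n => intro a; rfl
  | neg φ ih => intro a; simp [PrefModel.sat, ih]
  | conj φ ψ ihφ ihψ => intro a; simp [PrefModel.sat, ihφ, ihψ]
  | box φ ih =>
    intro a
    constructor
    · intro h t; exact (ih (t, true)).1 (h (t, true))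
    · intro h t; exact (ih t).2 (h t.1)
  | ob ψ φ ihψ ihφ =>
    intro a
    constructor
    · intro h w hw
      have := h (w, true) ⟨(ihφ (w, true)).2 hw.1, fun y hy => Or.inl (hw.2 y.1 ((ihφ y).1 hy))⟩
      exact (ihψ (w, true)).1 this
    · intro h w hw
      refine (ihψ w).2 (h w.1 ⟨(ihφ w).1 hw.1, fun y hy => ?_⟩)
      have h1 := hw.2 (y, true) ((ihφ (y, true)).2 hy)
      have h2 := hw.2 (y, false) ((ihφ (y, false)).2 hy)
      rcases h1 with h1 | h1
      · exact h1
      rcases h2 with h2 | h2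
      · exact h2
      · exfalso
        have : (y, true) = ((y : M.W), false) := h1 ▸ h2
        simp at this

/-- **Reflexivity does not affect the logic E**: a formula is valid in the
class of all preference models iff it is valid in the class of preference
models whose betterness relation is reflexive. -/
theorem E_reflexive_idle :
    ∀ φ : EForm,
      EValid φ ↔ (∀ M : PrefModel, (∀ w : M.W, M.R w w) → ∀ s : M.W, M.sat s φ) := by
  intro φ
  constructor
  · intro h M _ s; exact h M s
  · intro h M s
    have hr : ∀ w : (M.dup).W, (M.dup).R w w := fun w => Or.inr rfl
    exact (dup_sat M φ (s, true)).1 (h M.dup hr (s, true))
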